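/- Let L ≥ 1 be an integer and let φ, φ̃ ∈ (0,1) and ψ, ψ̃ > 0 be real numbers. Then for every λ ∈ ℂ with nonzero imaginary part and every nonzero vector x ∈ ℂ^{2L} satisfying A_L^T(φ,ψ) x = (1−λ) A_L^T(φ̃,ψ̃) x, one has |λ| ≤ |φ−φ̃| / (1−φ̃). -/

import Mathlib

open Matrix

/-- The L×L matrix with ones on the diagonal, −φ on the first subdiagonal, zeros elsewhere. -/
def lowerBidiag (L : ℕ) (φ : ℝ) : Matrix (Fin L) (Fin L) ℝ :=
  fun i j => if i = j then 1 else if (i : ℕ) = (j : ℕ) + 1 then -φ else 0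

/-- The L×L matrix whose only nonzero entry is a 1 in the bottom-right corner. -/
def cornerMat (L : ℕ) : Matrix (Fin L) (Fin L) ℝ :=
  fun i j => if (i : ℕ) = L - 1 ∧ (j : ℕ) = L - 1 then 1 else 0

/-- The terminal-cost ParaOpt block matrix A_L^T(φ,ψ) = [[B_L(φ), ψI],[−E, B_L(φ)ᵀ]]. -/
def terminalMat (L : ℕ) (φ ψ : ℝ) : Matrix (Fin L ⊕ Fin L) (Fin L ⊕ Fin L) ℝ :=
  Matrix.fromBlocks (lowerBidiag L φ) (ψ • (1 : Matrix (Fin L) (Fin L) ℝ))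
    (-(cornerMat L)) (lowerBidiag L φ)ᵀ

open Finset Complex
set_option maxRecDepth 10000

lemma im_pow_le (z : ℂ) : ∀ n : ℕ, |(z ^ (n+1)).im| ≤ (n+1) * |z.im| * ‖z‖ ^ n := by
  intro n
  induction n with
  | zero => simp
  | succ n ih =>
    have h1 : (z ^ (n+2)).im = z.re * (z ^ (n+1)).im + z.im * (z ^ (n+1)).re := by
      rw [pow_succ']; simp [Complex.mul_im]
    have h2 : |(z ^ (n+1)).re| ≤ ‖z‖ ^ (n+1) := by
      calc |(z ^ (n+1)).re| ≤ ‖z ^ (n+1)‖ := Complex.abs_re_le_norm _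
        _ = ‖z‖ ^ (n+1) := norm_pow _ _
    have h3 : |z.re| ≤ ‖z‖ := Complex.abs_re_le_norm z
    calc |(z ^ (n+2)).im| ≤ |z.re| * |(z ^ (n+1)).im| + |z.im| * |(z ^ (n+1)).re| := by
          rw [h1]; exact (abs_add_le _ _).trans (by rw [abs_mul, abs_mul])
      _ ≤ ‖z‖ * ((n+1) * |z.im| * ‖z‖ ^ n) + |z.im| * ‖z‖ ^ (n+1) := by
          gcongr <;> first | exact h3 | exact ih | exact h2 | positivity
      _ = ((n:ℝ)+1+1) * |z.im| * ‖z‖ ^ (n+1) := by ring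
      _ = (↑(n+1)+1) * |z.im| * ‖z‖ ^ (n+1) := by push_cast; ring


lemma pow_bound (ρ : ℝ) (h0 : 0 ≤ ρ) (h1 : ρ ≤ 1) :
    ∀ L : ℕ, 1 ≤ L → (L:ℝ) * (1 - ρ^2) * ρ^(2*L-1) ≤ 1 - ρ^(2*L) := by
  intro L
  induction L with
  | zero => intro h; omega
  | succ n ih =>
    intro _
    rcases Nat.eq_zero_or_pos n with hn | hn
    · subst hn
      norm_num
      nlinarith [mul_nonneg (sub_nonneg.mpr h1) (sq_nonneg ρ), sq_nonneg ρ, mul_nonneg (sub_nonneg.mpr h1) (sub_nonneg.mpr h1)]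
    · have ihn := ih hn
      have e1 : 2*(n+1) - 1 = 2*n + 1 := by omega
      have e2 : 2*n - 1 + 2 = 2*n + 1 := by omega
      have hp1 : ρ^(2*n+1) ≤ ρ^(2*n-1) := by
        apply pow_le_pow_of_le_one h0 h1; omega
      have hp2 : ρ^(2*n+1) ≤ ρ^(2*n) := by
        apply pow_le_pow_of_le_one h0 h1; omega
      have hr2 : (0:ℝ) ≤ 1 - ρ^2 := by nlinarith
      have key : 1 - ρ^(2*(n+1)) = (1 - ρ^(2*n)) + ρ^(2*n) * (1 - ρ^2) := by rw [pow_mul, pow_mul, pow_succ]; ring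
      rw [key, e1]
      have : ((n:ℝ)+1) * (1-ρ^2) * ρ^(2*n+1) = (n:ℝ)*(1-ρ^2)*ρ^(2*n+1) + (1-ρ^2)*ρ^(2*n+1) := by ring
      push_cast
      rw [this]
      have t1 : (n:ℝ)*(1-ρ^2)*ρ^(2*n+1) ≤ (n:ℝ)*(1-ρ^2)*ρ^(2*n-1) := by
        apply mul_le_mul_of_nonneg_left hp1; positivity
      have t2 : (1-ρ^2)*ρ^(2*n+1) ≤ ρ^(2*n)*(1-ρ^2) := by nlinarith
      linarith [ihn]


lemma partial_im_nonneg (u : ℂ) (hu : ‖u‖ = 1) (him : 0 < u.im) (m : ℕ) :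
    0 ≤ (∑ j ∈ range m, u ^ (2*j+1)).im := by
  set S := ∑ j ∈ range m, u ^ (2*j+1) with hS
  have hconj : u * (starRingEnd ℂ) u = 1 := by
    rw [Complex.mul_conj]
    norm_cast
    rw [← Complex.sq_norm, hu]; norm_num
  have key : S * (u - (starRingEnd ℂ) u) = (u^2)^m - 1 := by
    rw [hS, Finset.sum_mul]
    have : ∀ j ∈ range m, u ^ (2*j+1) * (u - (starRingEnd ℂ) u) = (u^2)^(j+1) - (u^2)^j := by
      intro j _
      have : u ^ (2*j+1) * (starRingEnd ℂ) u = (u^2)^j * (u * (starRingEnd ℂ) u) := by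
        rw [← pow_mul]; ring
      rw [mul_sub, this, hconj, mul_one, ← pow_mul]
      ring_nf
    rw [Finset.sum_congr rfl this, Finset.sum_range_sub (fun j => (u^2)^j)]
    simp
  have key2 : S * (u - (starRingEnd ℂ) u) = S * (↑(2 * u.im) * Complex.I) := by
    rw [Complex.sub_conj]
  have hre := congrArg Complex.re (key2.symm.trans key)
  have hre2 : -(S.im * (2 * u.im)) = ((u^2)^m).re - 1 := by
    simpa [Complex.mul_re, Complex.mul_im, Complex.ofReal_re, Complex.ofReal_im] using hre
  have hb : ((u^2)^m).re ≤ 1 := by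
    calc ((u^2)^m).re ≤ ‖(u^2)^m‖ := Complex.re_le_norm _
      _ = 1 := by rw [norm_pow, norm_pow, hu]; norm_num
  nlinarith [hre2, hb, him]

lemma sum_odd_im_nonneg (r : ℂ) (hle : ‖r‖ ≤ 1) (him : 0 < r.im) (L : ℕ) :
    0 ≤ (∑ j ∈ range L, r ^ (2*j+1)).im := by
  have hr0 : r ≠ 0 := by
    intro h; rw [h] at him; simp at him
  set ρ := ‖r‖ with hρdef
  have hρ : 0 < ρ := by
    rw [hρdef]; exact (norm_pos_iff.mpr hr0)
  set u := r * (↑(ρ⁻¹) : ℂ) with hudef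
  have hu : ‖u‖ = 1 := by
    rw [hudef, norm_mul, Complex.norm_real, Real.norm_eq_abs, abs_inv, abs_of_pos hρ, ← hρdef]
    field_simp
  have himu : 0 < u.im := by
    rw [hudef]
    have : (r * (↑(ρ⁻¹) : ℂ)).im = r.im * ρ⁻¹ := by
      simp [Complex.mul_im]
    rw [this]; positivity
  have hrpow : ∀ k : ℕ, (r ^ k).im = ρ^k * (u ^ k).im := by
    intro k
    have hru : r = (↑ρ : ℂ) * u := by
      rw [hudef]; push_cast
      rw [mul_comm ((ρ:ℂ)) _, mul_assoc]
      have : ((ρ:ℝ):ℂ) ≠ 0 := by exact_mod_cast ne_of_gt hρ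
      field_simp
    rw [hru, mul_pow]
    simp [← Complex.ofReal_pow, Complex.mul_im, Complex.ofReal_re, Complex.ofReal_im]
  have hsum : (∑ j ∈ range L, r ^ (2*j+1)).im = ∑ j ∈ range L, (ρ^(2*j+1)) • ((u ^ (2*j+1)).im) := by
    rw [Complex.im_sum]
    exact Finset.sum_congr rfl fun j _ => hrpow (2*j+1)
  rw [hsum, Finset.sum_range_by_parts (fun i => ρ^(2*i+1)) (fun i => (u^(2*i+1)).im) L]
  have hpart : ∀ m : ℕ, 0 ≤ ∑ i ∈ range m, (u^(2*i+1)).im := by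
    intro m
    have := partial_im_nonneg u hu himu m
    rwa [Complex.im_sum] at this
  have t1 : 0 ≤ ρ^(2*(L-1)+1) • ∑ i ∈ range L, (u^(2*i+1)).im := by
    have := hpart L
    have h2 : (0:ℝ) ≤ ρ^(2*(L-1)+1) := by positivity
    exact mul_nonneg h2 this
  have t2 : ∑ i ∈ range (L-1), (ρ^(2*(i+1)+1) - ρ^(2*i+1)) • (∑ j ∈ range (i+1), (u^(2*j+1)).im) ≤ 0 := by
    apply Finset.sum_nonpos
    intro i _
    apply mul_nonpos_of_nonpos_of_nonneg
    · have : ρ^(2*(i+1)+1) ≤ ρ^(2*i+1) := by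
        apply pow_le_pow_of_le_one (le_of_lt hρ) hle; omega
      linarith
    · exact hpart (i+1)
  simp only [smul_eq_mul] at *
  linarith

set_option maxHeartbeats 1000000 in
lemma key_im_nonneg (L : ℕ) (hL : 1 ≤ L) (φt : ℝ) (h0 : 0 < φt) (h1 : φt < 1)
    (r : ℂ) (hdisk : ‖r - ↑φt‖ < 1 - φt) (him : 0 < r.im) :
    0 ≤ ((r - ↑φt) * ∑ j ∈ range L, r ^ (2*j)).im := by
  set Q := ∑ j ∈ range L, r ^ (2*j) with hQdef
  set ρ := ‖r‖ with hρdef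
  have hρ0 : 0 ≤ ρ := norm_nonneg r
  have hρ1 : ρ < 1 := by
    have : r = (r - ↑φt) + ↑φt := by ring
    calc ρ = ‖(r - ↑φt) + ↑φt‖ := by rw [← this]
      _ ≤ ‖r - ↑φt‖ + ‖(↑φt : ℂ)‖ := norm_add_le _ _
      _ < (1 - φt) + φt := by
          rw [Complex.norm_real, Real.norm_eq_abs, abs_of_pos h0]; linarith
      _ = 1 := by ring
  have hre1 : r.re < 1 := by
    have h2 : (r - ↑φt).re ≤ ‖r - ↑φt‖ := Complex.re_le_norm _
    have h3 : (r - ↑φt).re = r.re - φt := by simp [Complex.sub_re]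
    linarith
  have hns : Complex.normSq r = ρ^2 := (Complex.sq_norm r).symm
  have hconstraint : 2*φt*(1 - r.re) ≤ 1 - ρ^2 := by
    have h2 : Complex.normSq (r - ↑φt) < (1 - φt)^2 := by
      rw [← Complex.sq_norm]
      have := norm_nonneg (r - ↑φt)
      nlinarith
    have h3 : Complex.normSq (r - ↑φt) = (r.re - φt)^2 + r.im^2 := by
      rw [Complex.normSq_apply]; simp [Complex.sub_re, Complex.sub_im]; ring
    have h4 : ρ^2 = r.re^2 + r.im^2 := by
      rw [← hns, Complex.normSq_apply]; ring
    nlinarith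
  have hA' : r * Q = ∑ j ∈ range L, r ^ (2*j+1) := by
    rw [hQdef, Finset.mul_sum]
    exact Finset.sum_congr rfl fun j _ => (pow_succ' r (2*j)).symm
  have hA : 0 ≤ (r * Q).im := by
    rw [hA']; exact sum_odd_im_nonneg r (le_of_lt hρ1) him L
  set A := (r * Q).im with hAdef
  set B := Q.im with hBdef
  have htarget : ((r - ↑φt) * Q).im = A - φt * B := by
    rw [sub_mul, Complex.sub_im, hAdef]
    congr 1
    simp [Complex.mul_im, hBdef]
  rw [htarget]
  by_cases hB : B ≤ 0
  · nlinarith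
  push_neg at hB
  set w := r ^ (2*L) with hwdef
  have hgeom : (1 - r^2) * Q = 1 - w := by
    have hQ2 : Q = ∑ j ∈ range L, (r^2)^j := by
      rw [hQdef]; exact Finset.sum_congr rfl fun j _ => by rw [← pow_mul]
    have hw2 : w = (r^2)^L := by rw [hwdef, ← pow_mul]
    rw [hQ2, hw2]
    linear_combination (-1 : ℂ) * geom_sum_mul (r^2) L
  have e1 : (2 : ℂ) - (r + (starRingEnd ℂ) r) = ↑(2 - 2*r.re) := by
    rw [Complex.add_conj]; push_cast; ring
  have e2 : (1 : ℂ) - r * (starRingEnd ℂ) r = ↑(1 - Complex.normSq r) := by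
    rw [Complex.mul_conj]; push_cast; ring
  have e3 : ((1:ℂ) + r) * (1 + (starRingEnd ℂ) r) = ↑(Complex.normSq (1 + r)) := by
    rw [← Complex.mul_conj]; rw [_root_.map_add, _root_.map_one]
  have e4 : ((1:ℂ) - r) * (1 + (starRingEnd ℂ) r)
      = ↑(1 - Complex.normSq r) - ↑(2*r.im) * Complex.I := by
    rw [Complex.ofReal_sub, Complex.ofReal_one]
    linear_combination (- Complex.mul_conj r) - Complex.sub_conj r
  have hid : (↑(2 - 2*r.re) * (r * Q) - ↑(1 - Complex.normSq r) * Q) * ↑(Complex.normSq (1 + r))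
      = -((↑(1 - Complex.normSq r) - ↑(2*r.im) * Complex.I) * (1 - w)) := by
    rw [← e4, ← e1, ← e2, ← e3]
    linear_combination (-((1:ℂ) - r) * (1 + (starRingEnd ℂ) r)) * hgeom
  have him_id := congrArg Complex.im hid
  simp only [Complex.mul_im, Complex.sub_im, Complex.sub_re, Complex.mul_re,
    Complex.ofReal_re, Complex.ofReal_im, Complex.one_im, Complex.one_re,
    Complex.I_re, Complex.I_im, Complex.neg_im] at him_id
  -- him_id should now be a polynomial identity in reals
  have hwim : |w.im| ≤ (2*L : ℝ) * r.im * ρ^(2*L-1) := by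
    have h5 := im_pow_le r (2*L-1)
    have h6 : 2*L - 1 + 1 = 2*L := by omega
    rw [h6] at h5
    have h7 : ((2*L - 1 : ℕ) : ℝ) + 1 = (2*L : ℝ) := by
      have : (2*L - 1 : ℕ) = 2*L - 1 := rfl
      push_cast [Nat.cast_sub (by omega : 1 ≤ 2*L)]
      ring
    rw [abs_of_pos him] at h5
    rw [← hwdef] at h5
    calc |w.im| ≤ (↑(2*L-1) + 1) * r.im * ρ^(2*L-1) := h5
      _ = (2*L : ℝ) * r.im * ρ^(2*L-1) := by rw [h7]
  have hwre : w.re ≤ ρ^(2*L) := by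
    calc w.re ≤ ‖w‖ := Complex.re_le_norm w
      _ = ρ^(2*L) := by rw [hwdef, norm_pow]
  have hpb := pow_bound ρ hρ0 (le_of_lt hρ1) L hL
  have hc1 : (0:ℝ) ≤ 1 - ρ^2 := by nlinarith
  have hN : 0 ≤ 2*r.im*(1-w.re) + (1-ρ^2)*w.im := by
    have k3 : -((2*L : ℝ) * r.im * ρ^(2*L-1)) ≤ w.im := by
      have := neg_abs_le w.im; linarith [hwim]
    have k4 : (1-ρ^2) * (-((2*L : ℝ) * r.im * ρ^(2*L-1))) ≤ (1-ρ^2) * w.im :=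
      mul_le_mul_of_nonneg_left k3 hc1
    have k5 : 2*r.im*((L:ℝ)*(1-ρ^2)*ρ^(2*L-1)) ≤ 2*r.im*(1-w.re) := by
      apply mul_le_mul_of_nonneg_left _ (by linarith : (0:ℝ) ≤ 2*r.im)
      linarith
    have k6 : 2*r.im*((L:ℝ)*(1-ρ^2)*ρ^(2*L-1)) + (1-ρ^2) * (-((2*L : ℝ) * r.im * ρ^(2*L-1))) = 0 := by
      push_cast; ring
    linarith
  have hnsp : 0 < Complex.normSq (1 + r) := by
    rw [Complex.normSq_pos]
    intro h
    have hr1 : r = -1 := by linear_combination h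
    have : ρ = 1 := by rw [hρdef, hr1]; simp
    linarith
  -- combine
  have hA2 : A = r.re * Q.im + r.im * Q.re := by
    rw [hAdef]; simp [Complex.mul_im]
  have hkey_id : ((2 - 2*r.re)*A - (1 - Complex.normSq r)*B) * Complex.normSq (1+r)
      = 2*r.im*(1-w.re) + (1 - Complex.normSq r)*w.im := by
    rw [hA2, hBdef]; linear_combination him_id
  have hN' : 0 ≤ 2*r.im*(1-w.re) + (1 - Complex.normSq r)*w.im := by
    rw [hns]; exact hN
  have hfinal : 0 ≤ (2 - 2*r.re)*A - (1 - ρ^2)*B := by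
    rw [← hns]
    by_contra hneg
    push_neg at hneg
    have h8 : ((2 - 2*r.re)*A - (1 - Complex.normSq r)*B) * Complex.normSq (1+r) < 0 :=
      mul_neg_of_neg_of_pos hneg hnsp
    rw [hkey_id] at h8
    linarith
  have s1 : 2*φt*(1-r.re)*B ≤ (1-ρ^2)*B := mul_le_mul_of_nonneg_right hconstraint (le_of_lt hB)
  have s2 : 0 ≤ 2*(1-r.re)*(A - φt*B) := by
    have e : 2*(1-r.re)*(A - φt*B) = ((2-2*r.re)*A - (1-ρ^2)*B) + ((1-ρ^2)*B - 2*φt*(1-r.re)*B) := by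
      ring
    rw [e]
    linarith
  by_contra hx
  push_neg at hx
  have : 2*(1-r.re)*(A - φt*B) < 0 := by
    apply mul_neg_of_pos_of_neg _ (by linarith)
    linarith
  linarith

section rowlemmas
variable {L : ℕ} (φ ψ : ℝ) (v : Fin L → ℂ)

lemma bsum0 (i : Fin L) (hi : (i : ℕ) = 0) :
    ∑ j, (↑(lowerBidiag L φ i j) : ℂ) * v j = v i := by
  have hfun : ∀ j : Fin L, (↑(lowerBidiag L φ i j) : ℂ) * v j = if j = i then v i else 0 := by
    intro j
    unfold lowerBidiag
    split_ifs with h1 h2 h3 h4 <;>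
      first
        | (push_cast; ring1)
        | (subst_vars; push_cast; ring1)
        | (exfalso; simp only [Fin.ext_iff, not_and] at *; omega)
  rw [Finset.sum_congr rfl (fun j _ => hfun j), Finset.sum_ite_eq',
    if_pos (Finset.mem_univ i)]

lemma bsum1 (i j0 : Fin L) (hij : (i : ℕ) = (j0 : ℕ) + 1) :
    ∑ j, (↑(lowerBidiag L φ i j) : ℂ) * v j = v i - ↑φ * v j0 := by
  have hfun : ∀ j : Fin L, (↑(lowerBidiag L φ i j) : ℂ) * v j
      = (if j = i then v i else 0) + (if j = j0 then -↑φ * v j0 else 0) := by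
    intro j
    unfold lowerBidiag
    split_ifs with h1 h2 h3 h4 h5 h6 h7 h8 <;>
      first
        | (push_cast; ring1)
        | (subst_vars; push_cast; ring1)
        | (exfalso; simp only [Fin.ext_iff, not_and] at *; omega)
  rw [Finset.sum_congr rfl (fun j _ => hfun j), Finset.sum_add_distrib,
    Finset.sum_ite_eq', Finset.sum_ite_eq', if_pos (Finset.mem_univ i), if_pos (Finset.mem_univ j0)]
  ring

lemma btsum (i j0 : Fin L) (hij : (j0 : ℕ) = (i : ℕ) + 1) :
    ∑ j, (↑(lowerBidiag L φ j i) : ℂ) * v j = v i - ↑φ * v j0 := by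
  have hfun : ∀ j : Fin L, (↑(lowerBidiag L φ j i) : ℂ) * v j
      = (if j = i then v i else 0) + (if j = j0 then -↑φ * v j0 else 0) := by
    intro j
    unfold lowerBidiag
    split_ifs with h1 h2 h3 h4 h5 h6 h7 h8 <;>
      first
        | (push_cast; ring1)
        | (subst_vars; push_cast; ring1)
        | (exfalso; simp only [Fin.ext_iff, not_and] at *; omega)
  rw [Finset.sum_congr rfl (fun j _ => hfun j), Finset.sum_add_distrib,
    Finset.sum_ite_eq', Finset.sum_ite_eq', if_pos (Finset.mem_univ i), if_pos (Finset.mem_univ j0)]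
  ring

lemma btsum_last (i : Fin L) (hi : (i : ℕ) = L - 1) :
    ∑ j, (↑(lowerBidiag L φ j i) : ℂ) * v j = v i := by
  have hfun : ∀ j : Fin L, (↑(lowerBidiag L φ j i) : ℂ) * v j = if j = i then v i else 0 := by
    intro j
    have hjl := j.isLt
    unfold lowerBidiag
    split_ifs with h1 h2 h3 h4 <;>
      first
        | (push_cast; ring1)
        | (subst_vars; push_cast; ring1)
        | (exfalso; simp only [Fin.ext_iff, not_and] at *; omega)
  rw [Finset.sum_congr rfl (fun j _ => hfun j), Finset.sum_ite_eq']
  simp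

lemma csum_last (hL : 1 ≤ L) (i : Fin L) (hi : (i : ℕ) = L - 1) :
    ∑ j, (↑(cornerMat L i j) : ℂ) * v j = v ⟨L-1, by omega⟩ := by
  have hfun : ∀ j : Fin L, (↑(cornerMat L i j) : ℂ) * v j
      = if j = (⟨L-1, by omega⟩ : Fin L) then v (⟨L-1, by omega⟩ : Fin L) else 0 := by
    intro j
    unfold cornerMat
    split_ifs with h1 h2 h3 <;>
      first
        | (push_cast; ring1)
        | (subst_vars; push_cast; ring1)
        | (exfalso; simp only [Fin.ext_iff, not_and] at *; omega)
  rw [Finset.sum_congr rfl (fun j _ => hfun j), Finset.sum_ite_eq']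
  simp

lemma csum_not (i : Fin L) (hi : ¬ ((i : ℕ) = L - 1)) :
    ∑ j, (↑(cornerMat L i j) : ℂ) * v j = 0 := by
  apply Finset.sum_eq_zero
  intro j _
  unfold cornerMat
  simp [hi]

lemma psum (i : Fin L) :
    ∑ j, (↑((ψ • (1 : Matrix (Fin L) (Fin L) ℝ)) i j) : ℂ) * v j = ↑ψ * v i := by
  have hfun : ∀ j : Fin L, (↑((ψ • (1 : Matrix (Fin L) (Fin L) ℝ)) i j) : ℂ) * v j
      = if j = i then ↑ψ * v i else 0 := by
    intro j
    simp only [Matrix.smul_apply, Matrix.one_apply, smul_eq_mul]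
    split_ifs with h1 h2 h3 <;>
      first
        | (push_cast; ring1)
        | (subst_vars; push_cast; ring1)
        | (exfalso; simp only [Fin.ext_iff, not_and] at *; omega)
  rw [Finset.sum_congr rfl (fun j _ => hfun j), Finset.sum_ite_eq']
  simp
end rowlemmas


section starid

variable {L : ℕ} (φ ψ φt ψt : ℝ) (lam : ℂ) (x : (Fin L ⊕ Fin L) → ℂ)

lemma expand_inl (φ' ψ' : ℝ) (i : Fin L) :
    (((terminalMat L φ' ψ').map Complex.ofReal).mulVec x) (Sum.inl i)
      = (∑ j, (↑(lowerBidiag L φ' i j) : ℂ) * x (Sum.inl j)) + ↑ψ' * x (Sum.inr i) := by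
  rw [Matrix.mulVec, dotProduct, Fintype.sum_sum_type]
  refine congrArg₂ (· + ·) ?_ ?_
  · exact Finset.sum_congr rfl (fun j _ => rfl)
  · calc ∑ a₂, ((terminalMat L φ' ψ').map Complex.ofReal) (Sum.inl i) (Sum.inr a₂) * x (Sum.inr a₂)
        = ∑ j, (↑((ψ' • (1 : Matrix (Fin L) (Fin L) ℝ)) i j) : ℂ) * x (Sum.inr j) :=
          Finset.sum_congr rfl (fun j _ => rfl)
      _ = ↑ψ' * x (Sum.inr i) := psum ψ' _ i

lemma expand_inr (φ' ψ' : ℝ) (i : Fin L) :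
    (((terminalMat L φ' ψ').map Complex.ofReal).mulVec x) (Sum.inr i)
      = -(∑ j, (↑(cornerMat L i j) : ℂ) * x (Sum.inl j))
        + ∑ j, (↑(lowerBidiag L φ' j i) : ℂ) * x (Sum.inr j) := by
  rw [Matrix.mulVec, dotProduct, Fintype.sum_sum_type]
  refine congrArg₂ (· + ·) ?_ ?_
  · calc ∑ a₁, ((terminalMat L φ' ψ').map Complex.ofReal) (Sum.inr i) (Sum.inl a₁) * x (Sum.inl a₁)
        = ∑ j, -((↑(cornerMat L i j) : ℂ) * x (Sum.inl j)) := by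
          apply Finset.sum_congr rfl
          intro j _
          show (↑((-(cornerMat L)) i j) : ℂ) * x (Sum.inl j) = _
          rw [Matrix.neg_apply]
          push_cast
          ring
      _ = -(∑ j, (↑(cornerMat L i j) : ℂ) * x (Sum.inl j)) := by
          rw [Finset.sum_neg_distrib]
  · apply Finset.sum_congr rfl
    intro j _
    show (↑(((lowerBidiag L φ')ᵀ) i j) : ℂ) * x (Sum.inr j) = _
    rw [Matrix.transpose_apply]

end starid

set_option maxHeartbeats 1000000 in
lemma star_identity (L : ℕ) (hL : 1 ≤ L) (φ ψ φt ψt : ℝ) (lam : ℂ) (hlam : lam ≠ 0)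
    (x : (Fin L ⊕ Fin L) → ℂ) (hx : x ≠ 0)
    (heq : ((terminalMat L φ ψ).map Complex.ofReal).mulVec x =
      (1 - lam) • ((terminalMat L φt ψt).map Complex.ofReal).mulVec x) :
    lam ^ (2*L-1) = -(↑ψ - (1-lam) * ↑ψt) *
      ∑ k ∈ Finset.range L, (↑φ - (1-lam) * ↑φt)^(2*(L-1-k)) * lam^(2*k) := by
  set s : ℂ := ↑φ - (1-lam) * ↑φt with hsdef
  set c : ℂ := ↑ψ - (1-lam) * ↑ψt with hcdef
  set y : Fin L → ℂ := fun i => x (Sum.inl i) with hydef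
  set z : Fin L → ℂ := fun i => x (Sum.inr i) with hzdef
  have hlast : L - 1 < L := by omega
  set last : Fin L := ⟨L-1, hlast⟩ with hlastdef
  -- row equations
  have hrow1 : ∀ i : Fin L,
      (∑ j, (↑(lowerBidiag L φ i j) : ℂ) * y j) + ↑ψ * z i
        = (1-lam) * ((∑ j, (↑(lowerBidiag L φt i j) : ℂ) * y j) + ↑ψt * z i) := by
    intro i
    have h := congrFun heq (Sum.inl i)
    rw [Pi.smul_apply, smul_eq_mul] at h
    rw [expand_inl x φ ψ i, expand_inl x φt ψt i] at h
    exact h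
  have hrow2 : ∀ i : Fin L,
      -(∑ j, (↑(cornerMat L i j) : ℂ) * y j) + (∑ j, (↑(lowerBidiag L φ j i) : ℂ) * z j)
        = (1-lam) * (-(∑ j, (↑(cornerMat L i j) : ℂ) * y j)
            + (∑ j, (↑(lowerBidiag L φt j i) : ℂ) * z j)) := by
    intro i
    have h := congrFun heq (Sum.inr i)
    rw [Pi.smul_apply, smul_eq_mul] at h
    rw [expand_inr x φ ψ i, expand_inr x φt ψt i] at h
    exact h
  -- scalar recurrences
  have hR0 : ∀ i : Fin L, (i:ℕ) = 0 → lam * y i + c * z i = 0 := by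
    intro i hi
    have h := hrow1 i
    rw [bsum0 φ y i hi, bsum0 φt y i hi] at h
    rw [hcdef]; linear_combination h
  have hR1 : ∀ i j : Fin L, (i:ℕ) = (j:ℕ)+1 → lam * y i - s * y j + c * z i = 0 := by
    intro i j hij
    have h := hrow1 i
    rw [bsum1 φ y i j hij, bsum1 φt y i j hij] at h
    rw [hcdef, hsdef]; linear_combination h
  have hR2 : ∀ i j : Fin L, (j:ℕ) = (i:ℕ)+1 → lam * z i - s * z j = 0 := by
    intro i j hij
    have hine : ¬ ((i:ℕ) = L - 1) := by have := j.isLt; omega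
    have h := hrow2 i
    rw [csum_not y i hine, btsum φ z i j hij, btsum φt z i j hij] at h
    rw [hsdef]; linear_combination h
  have hR3 : z last = y last := by
    have h := hrow2 last
    have hil : (last : ℕ) = L - 1 := rfl
    rw [csum_last y hL last hil, btsum_last φ z last hil, btsum_last φt z last hil] at h
    have h2 : lam * (z last - y last) = 0 := by linear_combination h
    rcases mul_eq_zero.mp h2 with h3 | h3
    · exact absurd h3 hlam
    · linear_combination h3
  -- downward induction for z
  have hLemZ : ∀ m : ℕ, m < L → ∀ i : Fin L, (i:ℕ) + m = L - 1 →
      lam^m * z i = s^m * z last := by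
    intro m
    induction m with
    | zero =>
      intro _ i hi
      have : i = last := Fin.ext (by show (i:ℕ) = L - 1; omega)
      rw [this]; simp
    | succ n ih =>
      intro hn i hi
      have hjlt : (i:ℕ) + 1 < L := by omega
      set j : Fin L := ⟨(i:ℕ)+1, hjlt⟩ with hjdef
      have hzz : lam * z i = s * z j := by
        have := hR2 i j rfl
        linear_combination this
      have hih := ih (by omega) j (by show (i:ℕ) + 1 + n = L - 1; omega)
      calc lam^(n+1) * z i = lam^n * (lam * z i) := by ring
        _ = lam^n * (s * z j) := by rw [hzz]
        _ = s * (lam^n * z j) := by ring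
        _ = s * (s^n * z last) := by rw [hih]
        _ = s^(n+1) * z last := by ring
  -- upward induction for y
  set zz : ℕ → ℂ := fun k => if h : k < L then z ⟨k, h⟩ else 0 with hzzdef
  have hLemY : ∀ m : ℕ, m < L → ∀ i : Fin L, (i:ℕ) = m →
      lam^(m+1) * y i = -c * ∑ k ∈ Finset.range (m+1), s^(m-k) * lam^k * zz k := by
    intro m
    induction m with
    | zero =>
      intro _ i hi
      have hz : zz 0 = z i := by
        rw [hzzdef]
        have : i = ⟨0, by omega⟩ := Fin.ext (by show (i:ℕ) = 0; omega)
        rw [this]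
        exact dif_pos (show 0 < L by omega)
      rw [Finset.sum_range_one, hz]
      have h0 := hR0 i hi
      simp only [Nat.sub_self, pow_zero, one_mul, pow_one]
      linear_combination h0
    | succ n ih =>
      intro hn i hi
      have hjlt : n < L := by omega
      set j : Fin L := ⟨n, hjlt⟩ with hjdef
      have hy : lam * y i = s * y j - c * z i := by
        have := hR1 i j (by rw [hi])
        linear_combination this
      have hih := ih (by omega) j rfl
      have hz : zz (n+1) = z i := by
        rw [hzzdef]
        have : i = ⟨n+1, by omega⟩ := Fin.ext (by show (i:ℕ) = n+1; omega)
        rw [this]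
        exact dif_pos (show n+1 < L by omega)
      have hsum : ∑ k ∈ Finset.range (n+2), s^(n+1-k) * lam^k * zz k
          = s * (∑ k ∈ Finset.range (n+1), s^(n-k) * lam^k * zz k) + lam^(n+1) * zz (n+1) := by
        rw [Finset.sum_range_succ]
        have : ∀ k ∈ Finset.range (n+1), s^(n+1-k) * lam^k * zz k
            = s * (s^(n-k) * lam^k * zz k) := by
          intro k hk
          have hk' : k ≤ n := by
            have := Finset.mem_range.mp hk; omega
          have : n+1-k = (n-k)+1 := by omega
          rw [this, pow_succ]
          ring
        rw [Finset.sum_congr rfl this, ← Finset.mul_sum]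
        have h9 : n + 1 - (n+1) = 0 := by omega
        rw [h9]
        ring
      calc lam^(n+2) * y i = lam^(n+1) * (lam * y i) := by ring
        _ = lam^(n+1) * (s * y j - c * z i) := by rw [hy]
        _ = s * (lam^(n+1) * y j) - c * (lam^(n+1) * z i) := by ring
        _ = s * (-c * ∑ k ∈ Finset.range (n+1), s^(n-k) * lam^k * zz k)
              - c * (lam^(n+1) * zz (n+1)) := by rw [hih, hz]
        _ = -c * (s * (∑ k ∈ Finset.range (n+1), s^(n-k) * lam^k * zz k) + lam^(n+1) * zz (n+1)) := by
              ring
        _ = -c * ∑ k ∈ Finset.range (n+2), s^(n+1-k) * lam^k * zz k := by rw [← hsum]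
  -- w ≠ 0
  have hzall : ∀ i : Fin L, z i = (s^(L-1-(i:ℕ)) * z last) * (lam^(L-1-(i:ℕ)))⁻¹ := by
    intro i
    have hm : L-1-(i:ℕ) < L := by have := i.isLt; omega
    have := hLemZ (L-1-(i:ℕ)) hm i (by have := i.isLt; omega)
    field_simp at this ⊢
    linear_combination this
  have hw : y last ≠ 0 := by
    intro hw0
    apply hx
    have hz0 : ∀ i : Fin L, z i = 0 := by
      intro i
      rw [hzall i, hR3, hw0]
      simp
    have hzz0 : ∀ k, zz k = 0 := by
      intro k
      rw [hzzdef]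
      by_cases h : k < L
      · simp only [dif_pos h]; exact hz0 _
      · simp [h]
    have hy0 : ∀ i : Fin L, y i = 0 := by
      intro i
      have hm : (i:ℕ) < L := i.isLt
      have := hLemY (i:ℕ) hm i rfl
      simp only [hzz0, mul_zero, Finset.sum_const_zero] at this
      have hpow : lam^((i:ℕ)+1) ≠ 0 := pow_ne_zero _ hlam
      rcases mul_eq_zero.mp this with h | h
      · exact absurd h hpow
      · exact h
    funext i
    rcases i with i | i
    · exact hy0 i
    · exact hz0 i
  -- assemble
  have hY := hLemY (L-1) (by omega) last rfl
  have hstep : ∀ k ∈ Finset.range L, lam^(L-1) * (s^(L-1-k) * lam^k * zz k)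
      = s^(2*(L-1-k)) * lam^(2*k) * z last := by
    intro k hk
    have hkL : k < L := Finset.mem_range.mp hk
    have hzzk : zz k = z ⟨k, hkL⟩ := by rw [hzzdef]; simp [hkL]
    have hZ := hLemZ (L-1-k) (by omega) ⟨k, hkL⟩ (by show k + (L-1-k) = L-1; omega)
    have hexp : L - 1 + k = 2*k + (L-1-k) := by omega
    calc lam^(L-1) * (s^(L-1-k) * lam^k * zz k)
        = s^(L-1-k) * (lam^(L-1+k) * zz k) := by rw [pow_add]; ring
      _ = s^(L-1-k) * (lam^(2*k) * (lam^(L-1-k) * z ⟨k, hkL⟩)) := by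
          rw [hzzk, hexp, pow_add]; ring
      _ = s^(L-1-k) * (lam^(2*k) * (s^(L-1-k) * z last)) := by rw [hZ]
      _ = s^(2*(L-1-k)) * lam^(2*k) * z last := by
          have : 2*(L-1-k) = (L-1-k) + (L-1-k) := by omega
          rw [this, pow_add]
          ring
  have hfin : lam^(2*L-1) * y last
      = (-c * ∑ k ∈ Finset.range L, s^(2*(L-1-k)) * lam^(2*k)) * y last := by
    have hLL : L - 1 + 1 = L := by omega
    have h2L : 2*L-1 = (L-1) + L := by omega
    calc lam^(2*L-1) * y last = lam^(L-1) * (lam^((L-1)+1) * y last) := by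
          rw [h2L, hLL, pow_add]; ring
      _ = lam^(L-1) * (-c * ∑ k ∈ Finset.range ((L-1)+1), s^(L-1-k) * lam^k * zz k) := by
          rw [hY]
      _ = -c * (lam^(L-1) * ∑ k ∈ Finset.range L, s^(L-1-k) * lam^k * zz k) := by
          rw [hLL]; ring
      _ = -c * ∑ k ∈ Finset.range L, lam^(L-1) * (s^(L-1-k) * lam^k * zz k) := by
          rw [Finset.mul_sum]
      _ = -c * ∑ k ∈ Finset.range L, s^(2*(L-1-k)) * lam^(2*k) * z last := by
          rw [Finset.sum_congr rfl hstep]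
      _ = (-c * ∑ k ∈ Finset.range L, s^(2*(L-1-k)) * lam^(2*k)) * y last := by
          rw [← hR3, ← Finset.sum_mul]
          ring
  exact mul_right_cancel₀ hw hfin

lemma main_ineq (L : ℕ) (hL : 1 ≤ L) (φt ψt : ℝ) (h0 : 0 < φt) (h1 : φt < 1) (hψt : 0 < ψt)
    (r : ℂ) (hdisk : ‖r - ↑φt‖ < 1 - φt) (him : 0 < r.im)
    (hQ0 : (∑ j ∈ range L, r^(2*j)) ≠ 0) :
    0 < ((r - ↑φt) * ∑ j ∈ range L, r^(2*j)).im
      + ψt * Complex.normSq (∑ j ∈ range L, r^(2*j)) * r.im := by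
  have h2 := key_im_nonneg L hL φt h0 h1 r hdisk him
  have h3 : 0 < Complex.normSq (∑ j ∈ range L, r^(2*j)) := Complex.normSq_pos.mpr hQ0
  have h4 : 0 < ψt * Complex.normSq (∑ j ∈ range L, r^(2*j)) * r.im := by positivity
  linarith


set_option maxHeartbeats 1000000 in
theorem final
    (L : ℕ) (hL : 1 ≤ L) (φ ψ φt ψt : ℝ)
    (hφ0 : 0 < φ) (hφ1 : φ < 1) (hφt0 : 0 < φt) (hφt1 : φt < 1)
    (hψ : 0 < ψ) (hψt : 0 < ψt)
    (lam : ℂ) (hlam : lam.im ≠ 0) (x : (Fin L ⊕ Fin L) → ℂ) (hx : x ≠ 0)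
    (hstar : lam ^ (2*L-1) = -(↑ψ - (1-lam) * ↑ψt) *
      ∑ k ∈ Finset.range L, (↑φ - (1-lam) * ↑φt)^(2*(L-1-k)) * lam^(2*k)) :
    ‖lam‖ ≤ |φ - φt| / (1 - φt) := by
  have hlam' : lam ≠ 0 := by
    intro h; rw [h] at hlam; simp at hlam
  set s : ℂ := ↑φ - (1-lam) * ↑φt with hsdef
  set c : ℂ := ↑ψ - (1-lam) * ↑ψt with hcdef
  set r : ℂ := s * lam⁻¹ with hrdef
  have hs_r : s = lam * r := by
    rw [hrdef]; field_simp
  clear_value r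
  set Q : ℂ := ∑ j ∈ Finset.range L, r^(2*j) with hQdef
  -- reduce the star identity to lam = -c * Q
  have hlamQ : lam = -c * Q := by
    have hterm : ∀ k ∈ Finset.range L, s^(2*(L-1-k)) * lam^(2*k)
        = lam^(2*L-2) * r^(2*(L-1-k)) := by
      intro k hk
      have hkL : k < L := Finset.mem_range.mp hk
      have hexp : 2*(L-1-k) + 2*k = 2*L-2 := by omega
      have hpows : lam^(2*(L-1-k)) * lam^(2*k) = lam^(2*L-2) := by
        rw [← pow_add, hexp]
      calc s^(2*(L-1-k)) * lam^(2*k)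
          = (lam^(2*(L-1-k)) * lam^(2*k)) * r^(2*(L-1-k)) := by rw [hs_r, mul_pow]; ring
        _ = lam^(2*L-2) * r^(2*(L-1-k)) := by rw [hpows]
    have hsum2 : ∑ k ∈ Finset.range L, s^(2*(L-1-k)) * lam^(2*k)
        = lam^(2*L-2) * Q := by
      rw [Finset.sum_congr rfl hterm, ← Finset.mul_sum, hQdef]
      congr 1
      exact Finset.sum_range_reflect (fun j => r^(2*j)) L
    rw [hsum2] at hstar
    have h2L : 2*L-1 = (2*L-2)+1 := by omega
    rw [h2L, pow_succ] at hstar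
    have hcan : lam ^ (2*L-2) * lam = lam ^ (2*L-2) * (-c * Q) := by
      rw [hstar]; ring
    exact mul_left_cancel₀ (pow_ne_zero _ hlam') hcan
  have hQ0 : Q ≠ 0 := by
    intro h
    rw [h, mul_zero] at hlamQ
    exact hlam' hlamQ
  by_cases hφeq : φ = φt
  · -- r = φt, contradiction with nonreal lam
    exfalso
    have hsp : s = lam * ↑φt := by
      rw [hsdef, hφeq]; ring
    have hrft : r = ↑φt := by
      rw [hrdef, hsp]
      field_simp
    set q : ℝ := ∑ j ∈ Finset.range L, φt^(2*j) with hqdef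
    have hQq : Q = ↑q := by
      rw [hQdef, hqdef, hrft]
      push_cast
      rfl
    have hq0 : 0 ≤ q := by
      rw [hqdef]
      apply Finset.sum_nonneg
      intro j _
      positivity
    rw [hQq] at hlamQ
    have him := congrArg Complex.im hlamQ
    simp only [Complex.neg_im, Complex.mul_im, Complex.sub_im, Complex.sub_re,
      Complex.one_im, Complex.one_re, Complex.ofReal_im, Complex.ofReal_re,
      Complex.mul_re, Complex.mul_im, Complex.neg_re, hcdef] at him
    have him2 : lam.im * (1 + ψt * q) = 0 := by nlinarith [him]
    rcases mul_eq_zero.mp him2 with h | h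
    · exact hlam h
    · nlinarith
  · -- main case
    by_contra hcon
    push_neg at hcon
    set d : ℝ := φ - φt with hddef
    have hd0 : d ≠ 0 := fun h => hφeq (by rw [hddef] at h; linarith [sub_eq_zero.mp h])
    have h1φt : (0:ℝ) < 1 - φt := by linarith
    have hlampos : 0 < ‖lam‖ := by
      simpa using (norm_pos_iff.mpr hlam')
    have hr_eq : (r - ↑φt) * lam = ↑d := by
      rw [hddef]
      push_cast
      linear_combination -hs_r
    have habs : ‖r - ↑φt‖ < 1 - φt := by
      have h1 : ‖r - ↑φt‖ * ‖lam‖ = |d| := by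
        rw [← norm_mul, hr_eq, Complex.norm_real, Real.norm_eq_abs]
      have hdlt : |d| < (1 - φt) * ‖lam‖ := by
        rw [hddef]
        calc |φ - φt| = (|φ - φt| / (1 - φt)) * (1 - φt) := by field_simp
          _ < ‖lam‖ * (1 - φt) := by
              apply mul_lt_mul_of_pos_right hcon h1φt
          _ = (1 - φt) * ‖lam‖ := by ring
      nlinarith [h1, hdlt, hlampos]
    have hns : Complex.normSq lam ≠ 0 := fun h => hlam' (Complex.normSq_eq_zero.mp h)
    have hrim : r.im = -(d * (lam.im * (Complex.normSq lam)⁻¹)) := by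
      have hr_eq2 : r - ↑φt = ↑d * lam⁻¹ := by
        field_simp
        linear_combination hr_eq
      have h10 : (r - ↑φt).im = (↑d * lam⁻¹).im := by rw [hr_eq2]
      simpa [Complex.sub_im, Complex.mul_im, Complex.inv_im, Complex.inv_re,
        Complex.ofReal_im, Complex.ofReal_re, neg_div, div_eq_mul_inv] using h10
    have hrim0 : r.im ≠ 0 := by
      rw [hrim, neg_ne_zero]
      exact mul_ne_zero hd0 (mul_ne_zero hlam (inv_ne_zero hns))
    set a : ℝ := (ψ - ψt) / d with hadef
    have had : (↑a : ℂ) * ↑d = ↑(ψ - ψt) := by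
      rw [← Complex.ofReal_mul]
      congr 1
      rw [hadef]
      field_simp
    set P : ℂ := (r - ↑φt) * Q with hPdef
    have hE : (1 : ℂ) + ↑ψt * Q + ↑a * P = 0 := by
      have hEl : ((1 : ℂ) + ↑ψt * Q + ↑a * P) * lam = 0 := by
        rw [hPdef]
        linear_combination hlamQ + (↑a * Q) * hr_eq + Q * had + Q * (Complex.ofReal_sub ψ ψt)
      rcases mul_eq_zero.mp hEl with h | h
      · exact h
      · exact absurd h hlam'
    have hdagger : P.im + ψt * Complex.normSq Q * r.im = 0 := by
      have hE2 : ((1 : ℂ) + ↑ψt * Q + ↑a * P) * (starRingEnd ℂ) P = 0 := by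
        rw [hE, zero_mul]
      have e5 : Q * (starRingEnd ℂ) Q = ↑(Complex.normSq Q) := Complex.mul_conj Q
      have e6 : P * (starRingEnd ℂ) P = ↑(Complex.normSq P) := Complex.mul_conj P
      have e7 : (starRingEnd ℂ) P = (starRingEnd ℂ) Q * (starRingEnd ℂ) (r - ↑φt) := by
        rw [hPdef, _root_.map_mul]; ring
      have hexp : ((1 : ℂ) + ↑ψt * Q + ↑a * P) * (starRingEnd ℂ) P
          = (starRingEnd ℂ) P + ↑ψt * (↑(Complex.normSq Q) * (starRingEnd ℂ) (r - ↑φt))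
            + ↑a * ↑(Complex.normSq P) := by
        linear_combination (↑ψt * Q) * e7 + (↑ψt * (starRingEnd ℂ) (r - ↑φt)) * e5 + ↑a * e6
      rw [hexp] at hE2
      have him2 := congrArg Complex.im hE2
      simp only [Complex.add_im, Complex.mul_im, Complex.conj_im, Complex.conj_re,
        Complex.ofReal_im, Complex.ofReal_re, Complex.sub_im, Complex.sub_re,
        Complex.zero_im, Complex.mul_re] at him2
      have : -P.im + ψt * (Complex.normSq Q * (-(r.im))) = 0 := by
        rw [← him2]
        push_cast
        ring
      linarith
    rcases lt_or_gt_of_ne hrim0 with hneg | hpos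
    · -- r.im < 0 : apply main_ineq to conj r
      have hconjQ : (∑ j ∈ Finset.range L, ((starRingEnd ℂ) r)^(2*j)) = (starRingEnd ℂ) Q := by
        rw [hQdef, _root_.map_sum]
        exact Finset.sum_congr rfl fun j _ => (_root_.map_pow _ _ _).symm
      have hdisk' : ‖(starRingEnd ℂ) r - ↑φt‖ < 1 - φt := by
        have : (starRingEnd ℂ) r - ↑φt = (starRingEnd ℂ) (r - ↑φt) := by
          rw [_root_.map_sub, Complex.conj_ofReal]
        rw [this, Complex.norm_conj]
        exact habs
      have him' : 0 < ((starRingEnd ℂ) r).im := by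
        rw [Complex.conj_im]; linarith
      have hQ0' : (∑ j ∈ Finset.range L, ((starRingEnd ℂ) r)^(2*j)) ≠ 0 := by
        rw [hconjQ]
        simpa using hQ0
      have hin := main_ineq L hL φt ψt hφt0 hφt1 hψt ((starRingEnd ℂ) r) hdisk' him' hQ0'
      rw [hconjQ] at hin
      have e8 : ((starRingEnd ℂ) r - ↑φt) * (starRingEnd ℂ) Q = (starRingEnd ℂ) P := by
        rw [hPdef, _root_.map_mul, _root_.map_sub, Complex.conj_ofReal]
      rw [e8, Complex.normSq_conj, Complex.conj_im, Complex.conj_im] at hin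
      linarith
    · -- r.im > 0
      have hin := main_ineq L hL φt ψt hφt0 hφt1 hψt r habs hpos hQ0
      rw [← hQdef, ← hPdef] at hin
      linarith


theorem terminal_cost_paraopt_nonreal_eigenvalue_bound
    (L : ℕ) (hL : 1 ≤ L) (φ ψ φt ψt : ℝ)
    (hφ0 : 0 < φ) (hφ1 : φ < 1) (hφt0 : 0 < φt) (hφt1 : φt < 1)
    (hψ : 0 < ψ) (hψt : 0 < ψt)
    (lam : ℂ) (hlam : lam.im ≠ 0) (x : (Fin L ⊕ Fin L) → ℂ) (hx : x ≠ 0)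
    (heq : ((terminalMat L φ ψ).map Complex.ofReal).mulVec x =
      (1 - lam) • ((terminalMat L φt ψt).map Complex.ofReal).mulVec x) :
    ‖lam‖ ≤ |φ - φt| / (1 - φt) := by
  have hlam' : lam ≠ 0 := by
    intro h; rw [h] at hlam; simp at hlam
  exact final L hL φ ψ φt ψt hφ0 hφ1 hφt0 hφt1 hψ hψt lam hlam x hx
    (star_identity L hL φ ψ φt ψt lam hlam' x hx heq)
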